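/- arXiv:1701.04028 — 2 statements merged into one kernel-verified Lean document; each statement's English description precedes it below -/
import Mathlib

section
/- If a code φ : Aⁿ → {0,1}* is uniquely decodable (i.e., the concatenation map on finite sequences of codewords is injective), then the codeword lengths satisfy the Kraft inequality: ∑_{u ∈ Aⁿ} 2^(−|φ(u)|) ≤ 1. -/
open Finset

section KraftAux

variable {A : Type*} [Fintype A] {n : ℕ}

private lemma kraft_fiber_card (φ : (Fin n → A) → List Bool)
    (hUD : ∀ L₁ L₂ : List (Fin n → A), (L₁.map φ).flatten = (L₂.map φ).flatten → L₁ = L₂)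
    (r ℓ : ℕ) :
    ((univ : Finset (Fin r → (Fin n → A))).filter
      (fun p => (∑ i, (φ (p i)).length) = ℓ)).card ≤ 2 ^ ℓ := by
  classical
  have hmain : ((univ : Finset (Fin r → (Fin n → A))).filter
      (fun p => (∑ i, (φ (p i)).length) = ℓ)).card ≤
      ((univ : Finset (List.Vector Bool ℓ)).image List.Vector.toList).card := by
    apply Finset.card_le_card_of_injOn (fun p => ((List.ofFn p).map φ).flatten)
    · intro p hp
      rcases Finset.mem_filter.mp hp with ⟨-, hp⟩
      have hlen : (((List.ofFn p).map φ).flatten).length = ℓ := by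
        rw [List.length_flatten, List.map_map]
        simpa [List.sum_ofFn, Function.comp] using hp
      exact Finset.mem_image.mpr ⟨⟨_, hlen⟩, Finset.mem_univ _, rfl⟩
    · intro p _ q _ h
      exact List.ofFn_injective (hUD _ _ h)
  have himg : ((univ : Finset (List.Vector Bool ℓ)).image List.Vector.toList).card
      = 2 ^ ℓ := by
    rw [Finset.card_image_of_injective _ List.Vector.toList_injective,
      Finset.card_univ, card_vector, Fintype.card_bool]
  exact hmain.trans (le_of_eq himg)
end KraftAux

/-- Kraft inequality for uniquely decodable codes: if the concatenation of
codewords determines the sequence of source words, then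
`∑_{u ∈ Aⁿ} 2^{-|φ u|} ≤ 1`. -/
theorem kraft_of_uniquely_decodable {A : Type*} [Fintype A] (n : ℕ) (hn : 1 ≤ n)
    (φ : (Fin n → A) → List Bool)
    (hUD : ∀ L₁ L₂ : List (Fin n → A), (L₁.map φ).flatten = (L₂.map φ).flatten → L₁ = L₂) :
    ∑ u : Fin n → A, (2 : ℝ) ^ (-((φ u).length : ℤ)) ≤ 1 := by
  classical
  by_cases hA : Nonempty (Fin n → A)
  case neg =>
    rw [Finset.sum_eq_zero (fun u _ => absurd ⟨u⟩ hA)]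
    norm_num
  set S : ℝ := ∑ u : Fin n → A, (2 : ℝ) ^ (-((φ u).length : ℤ)) with hS
  set M : ℕ := Finset.univ.sup (fun u : Fin n → A => (φ u).length) with hM
  have hzp : ∀ k : ℕ, (2:ℝ) ^ (-(k:ℤ)) = (2⁻¹ : ℝ) ^ k := by
    intro k; rw [zpow_neg, zpow_natCast, inv_pow]
  have hTM : ∀ {r : ℕ} (p : Fin r → (Fin n → A)), (∑ i, (φ (p i)).length) ≤ r * M := by
    intro r p
    calc ∑ i, (φ (p i)).length
        ≤ ∑ _i : Fin r, M := Finset.sum_le_sum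
          (fun i _ => Finset.le_sup (f := fun u : Fin n → A => (φ u).length)
            (Finset.mem_univ (p i)))
      _ = r * M := by simp [mul_comm]
  -- key bound : S ^ r ≤ r * M + 1
  have key : ∀ r : ℕ, S ^ r ≤ r * M + 1 := by
    intro r
    have h1 : S ^ r = ∑ p : Fin r → (Fin n → A), (2⁻¹ : ℝ) ^ (∑ i, (φ (p i)).length) := by
      rw [hS, ← Fin.prod_const r,
        Fintype.prod_sum (f := fun (_ : Fin r) u => (2:ℝ) ^ (-((φ u).length : ℤ)))]
      refine Finset.sum_congr rfl (fun p _ => ?_)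
      simp_rw [hzp]
      exact Finset.prod_pow_eq_pow_sum _ _ _
    have h2 : S ^ r = ∑ ℓ ∈ Finset.range (r * M + 1),
        ∑ p ∈ (univ : Finset (Fin r → (Fin n → A))).filter
          (fun p => (∑ i, (φ (p i)).length) = ℓ), (2⁻¹ : ℝ) ^ ℓ := by
      rw [h1, ← Finset.sum_fiberwise_of_maps_to
        (fun p _ => Finset.mem_range.mpr (Nat.lt_succ_of_le (hTM p)))]
      exact Finset.sum_congr rfl fun ℓ _ => Finset.sum_congr rfl fun p hp => by
        rcases Finset.mem_filter.mp hp with ⟨-, hp⟩; rw [hp]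
    rw [h2]
    calc ∑ ℓ ∈ Finset.range (r * M + 1),
        ∑ p ∈ (univ : Finset (Fin r → (Fin n → A))).filter
          (fun p => (∑ i, (φ (p i)).length) = ℓ), (2⁻¹ : ℝ) ^ ℓ
        ≤ ∑ _ℓ ∈ Finset.range (r * M + 1), 1 := by
          refine Finset.sum_le_sum (fun ℓ _ => ?_)
          rw [Finset.sum_const, nsmul_eq_mul]
          have hcard : (((univ : Finset (Fin r → (Fin n → A))).filter
              (fun p => (∑ i, (φ (p i)).length) = ℓ)).card : ℝ) ≤ 2 ^ ℓ := by
            exact_mod_cast kraft_fiber_card φ hUD r ℓ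
          calc (((univ : Finset (Fin r → (Fin n → A))).filter
              (fun p => (∑ i, (φ (p i)).length) = ℓ)).card : ℝ) * (2⁻¹:ℝ) ^ ℓ
              ≤ (2:ℝ) ^ ℓ * (2⁻¹:ℝ) ^ ℓ :=
                mul_le_mul_of_nonneg_right hcard (by positivity)
            _ = 1 := by rw [← mul_pow]; norm_num
      _ = r * M + 1 := by simp
  -- conclude S ≤ 1
  by_contra hS1
  push_neg at hS1
  set e : ℝ := S - 1 with he
  have he0 : 0 < e := by simp only [he]; linarith
  obtain ⟨r, hr⟩ := exists_nat_gt ((2 * (M : ℝ) + 2) / (e * e))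
  have hr0 : (0:ℝ) < r := lt_of_le_of_lt (by positivity) hr
  have hr1 : (1:ℝ) ≤ r := by
    have : 0 < r := by exact_mod_cast hr0
    exact_mod_cast this
  have hbern : 1 + (r : ℝ) * e ≤ S ^ r := by
    have := one_add_mul_le_pow (a := e) (by linarith) r
    simpa [he] using this
  have hpp : S ^ (2 * r) = S ^ r * S ^ r := by rw [two_mul, pow_add]
  have h2r : S ^ (2 * r) ≤ 2 * (r:ℝ) * M + 1 := by
    have := key (2 * r)
    push_cast at this
    linarith
  have hsq : (1 + (r:ℝ)*e) * (1 + (r:ℝ)*e) ≤ S ^ r * S ^ r :=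
    mul_le_mul hbern hbern (by positivity) (le_trans (by positivity) hbern)
  have hlt : 2 * (M:ℝ) + 2 < (r:ℝ) * (e * e) := by
    rw [div_lt_iff₀ (by positivity)] at hr
    linarith [hr]
  nlinarith [mul_lt_mul_of_pos_left hlt hr0, mul_pos hr0 he0]
end

section
/- Let μ_x and μ_y be stationary measures with memory at most M on a finite alphabet A, with all M-th order conditional probabilities of μ_y positive. Then for all m > M and all pasts x_{−t}…x₀, y_{−k}…y₀ (t, k ≥ M), the expected log-likelihood ratio ∑_{w∈Aᵐ} μ_x(w) log(μ_x(w | x_{−t}…x₀)/μ_y(w | y_{−k}…y₀)) equals (m − M)·λ + r(x,y,m), where λ = ∑_{v∈A^M} μ_x(v) ∑_{a∈A} μ_x(a|v) log(μ_x(a|v)/μ_y(a|v)) and |r| is bounded by a constant depending only on M, A, μ_x, μ_y (not on m, t, k). -/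
/-- Conditional probability of the next letter `a` given the preceding word `u`. -/
noncomputable def condProb {A : Type*} (μ : List A → ℝ) (a : A) (u : List A) : ℝ :=
  μ (u ++ [a]) / μ u

/-- The last `M` letters of a word. -/
def lastN {A : Type*} (M : ℕ) (u : List A) : List A :=
  u.drop (u.length - M)

section aux
set_option linter.unusedSectionVars false
variable {A : Type*} [Fintype A]

lemma lastN_append (M : ℕ) (u l : List A) (h : M ≤ l.length) :
    lastN M (u ++ l) = lastN M l := by
  unfold lastN
  rw [List.length_append]
  have h2 : u.length + l.length - M = u.length + (l.length - M) := by omega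
  rw [h2, List.drop_append]
  simp

lemma lastN_cons (M : ℕ) (a : A) (l : List A) (h : M ≤ l.length) :
    lastN M (a :: l) = lastN M l := by
  simpa using lastN_append M [a] l h

lemma lastN_self (M : ℕ) (l : List A) (h : l.length = M) : lastN M l = l := by
  unfold lastN; rw [h]; simp

lemma lastN_length (M : ℕ) (l : List A) (h : M ≤ l.length) : (lastN M l).length = M := by
  unfold lastN; rw [List.length_drop]; omega

lemma sum_ofFn_snoc (m : ℕ) (f : List A → ℝ) :
    ∑ w : Fin (m+1) → A, f (List.ofFn w)
      = ∑ w : Fin m → A, ∑ a : A, f (List.ofFn w ++ [a]) := by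
  rw [← (Fin.snocEquiv (fun _ : Fin (m+1) => A)).sum_comp (fun w => f (List.ofFn w)),
    Fintype.sum_prod_type]
  rw [Finset.sum_comm]
  refine Finset.sum_congr rfl fun w _ => Finset.sum_congr rfl fun a _ => ?_
  congr 1
  rw [List.ofFn_succ']
  simp [Fin.snocEquiv, List.concat_eq_append]

lemma sum_ofFn_cons (m : ℕ) (f : List A → ℝ) :
    ∑ w : Fin (m+1) → A, f (List.ofFn w)
      = ∑ a : A, ∑ w : Fin m → A, f (a :: List.ofFn w) := by
  rw [← (Fin.consEquiv (fun _ : Fin (m+1) => A)).sum_comp (fun w => f (List.ofFn w)),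
    Fintype.sum_prod_type]
  refine Finset.sum_congr rfl fun a _ => Finset.sum_congr rfl fun w _ => ?_
  congr 1
  rw [List.ofFn_succ]
  simp [Fin.consEquiv]

lemma total_mass (μ : List A → ℝ) (hnil : μ [] = 1)
    (hstat : ∀ u : List A, μ u = ∑ a : A, μ (a :: u)) :
    ∀ m : ℕ, ∑ w : Fin m → A, μ (List.ofFn w) = 1 := by
  intro m
  induction m with
  | zero => simp [hnil]
  | succ m ih =>
    rw [sum_ofFn_cons m (fun l => μ l), Finset.sum_comm]
    calc ∑ w : Fin m → A, ∑ a : A, μ (a :: List.ofFn w)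
        = ∑ w : Fin m → A, μ (List.ofFn w) :=
          Finset.sum_congr rfl fun w _ => (hstat _).symm
      _ = 1 := ih

lemma sum_last_stat (M : ℕ) (μ : List A → ℝ)
    (hstat : ∀ u : List A, μ u = ∑ a : A, μ (a :: u))
    (g : List A → A → ℝ) :
    ∀ n : ℕ,
      ∑ w : Fin (M + n) → A, ∑ a : A, μ (List.ofFn w ++ [a]) * g (lastN M (List.ofFn w)) a
        = ∑ v : Fin M → A, ∑ a : A, μ (List.ofFn v ++ [a]) * g (List.ofFn v) a := by
  intro n
  induction n with
  | zero =>
    refine Finset.sum_congr rfl fun v _ => Finset.sum_congr rfl fun a _ => ?_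
    rw [lastN_self M _ (by simp)]
  | succ n ih =>
    have hty : M + (n + 1) = (M + n) + 1 := rfl
    rw [hty, sum_ofFn_cons (M + n)
      (fun l => ∑ a : A, μ (l ++ [a]) * g (lastN M l) a), Finset.sum_comm]
    rw [← ih]
    refine Finset.sum_congr rfl fun w _ => ?_
    have hlen : M ≤ (List.ofFn w).length := by simp
    calc ∑ b : A, ∑ a : A, μ ((b :: List.ofFn w) ++ [a]) * g (lastN M (b :: List.ofFn w)) a
        = ∑ a : A, ∑ b : A, μ (b :: (List.ofFn w ++ [a])) * g (lastN M (List.ofFn w)) a := by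
          rw [Finset.sum_comm]
          refine Finset.sum_congr rfl fun a _ => Finset.sum_congr rfl fun b _ => by
            rw [lastN_cons M b _ hlen, List.cons_append]
      _ = ∑ a : A, μ (List.ofFn w ++ [a]) * g (lastN M (List.ofFn w)) a := by
          refine Finset.sum_congr rfl fun a _ => ?_
          rw [← Finset.sum_mul, ← hstat]

lemma log_chain (μ : List A → ℝ) (hpos : ∀ u, 0 < μ u) :
    ∀ (w u : List A), Real.log (μ (u ++ w) / μ u)
      = ∑ i : Fin w.length, Real.log (condProb μ (w.get i) (u ++ w.take i)) := by
  intro w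
  induction w with
  | nil =>
    intro u
    rw [List.append_nil, div_self (hpos u).ne']
    simp
  | cons a w' ih =>
    intro u
    have h2 : μ (u ++ a :: w') / μ u
        = (μ (u ++ [a]) / μ u) * (μ ((u ++ [a]) ++ w') / μ (u ++ [a])) := by
      have h0 : μ u ≠ 0 := (hpos u).ne'
      have h1 : μ (u ++ [a]) ≠ 0 := (hpos (u ++ [a])).ne'
      rw [show u ++ a :: w' = (u ++ [a]) ++ w' by simp]
      field_simp
    rw [h2, Real.log_mul (div_pos (hpos _) (hpos _)).ne' (div_pos (hpos _) (hpos _)).ne']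
    rw [ih (u ++ [a])]
    simp only [List.length_cons]
    rw [Fin.sum_univ_succ]
    congr 1
    · simp [condProb]
    · refine Finset.sum_congr rfl fun i _ => ?_
      congr 1
      simp [List.take_succ_cons]


lemma exists_logCondProb_bound (M : ℕ) (μ : List A → ℝ) :
    ∃ c : ℝ, 0 ≤ c ∧ ∀ (u : List A) (a : A), u.length = M →
      |Real.log (condProb μ a u)| ≤ c := by
  refine ⟨∑ v : Fin M → A, ∑ a : A, |Real.log (condProb μ a (List.ofFn v))|,
    by positivity, ?_⟩
  intro u a hu
  have hfu : u = List.ofFn (fun i : Fin M => u.get (Fin.cast hu.symm i)) := by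
    apply List.ext_getElem
    · simp [hu]
    · intro i h1 h2
      simp
  calc |Real.log (condProb μ a u)|
      ≤ ∑ b : A, |Real.log (condProb μ b u)| :=
        Finset.single_le_sum (f := fun b => |Real.log (condProb μ b u)|)
          (fun b _ => abs_nonneg _) (Finset.mem_univ a)
    _ ≤ ∑ v : Fin M → A, ∑ b : A, |Real.log (condProb μ b (List.ofFn v))| := by
        rw [hfu]
        exact Finset.single_le_sum
          (f := fun v : Fin M → A => ∑ b : A, |Real.log (condProb μ b (List.ofFn v))|)
          (fun v _ => Finset.sum_nonneg fun b _ => abs_nonneg _) (Finset.mem_univ _)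


end aux

section main
set_option linter.unusedSectionVars false
variable {A : Type*} [Fintype A]

/-- Auxiliary: the expected log-likelihood ratio sum. -/
noncomputable def Sfun (μx μy : List A → ℝ) (m : ℕ) (px py : List A) : ℝ :=
  ∑ w : Fin m → A, μx (List.ofFn w) *
    Real.log ((μx (px ++ List.ofFn w) / μx px) / (μy (py ++ List.ofFn w) / μy py))

/-- Auxiliary: the divergence rate `λ`. -/
noncomputable def lamSum (M : ℕ) (μx μy : List A → ℝ) : ℝ :=
  ∑ v : Fin M → A, ∑ a : A, μx (List.ofFn v ++ [a]) *
    Real.log (condProb μx a (List.ofFn v) / condProb μy a (List.ofFn v))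

lemma condProb_pos {μ : List A → ℝ} (hpos : ∀ u, 0 < μ u) (a : A) (u : List A) :
    0 < condProb μ a u := div_pos (hpos _) (hpos _)

lemma S_step (M : ℕ) (μx μy : List A → ℝ)
    (hxpos : ∀ u, 0 < μx u) (hypos : ∀ u, 0 < μy u)
    (hxcons : ∀ u : List A, μx u = ∑ a : A, μx (u ++ [a]))
    (hxstat : ∀ u : List A, μx u = ∑ a : A, μx (a :: u))
    (hxmem : ∀ (u : List A) (a : A), M ≤ u.length → condProb μx a u = condProb μx a (lastN M u))
    (hymem : ∀ (u : List A) (a : A), M ≤ u.length → condProb μy a u = condProb μy a (lastN M u))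
    (m : ℕ) (hm : M ≤ m) (px py : List A) :
    Sfun μx μy (m+1) px py = Sfun μx μy m px py + lamSum M μx μy := by
  unfold Sfun
  rw [sum_ofFn_snoc m (fun l => μx l *
    Real.log ((μx (px ++ l) / μx px) / (μy (py ++ l) / μy py)))]
  have key : ∀ (w : Fin m → A) (a : A),
      μx (List.ofFn w ++ [a]) *
        Real.log ((μx (px ++ (List.ofFn w ++ [a])) / μx px)
          / (μy (py ++ (List.ofFn w ++ [a])) / μy py))
      = μx (List.ofFn w ++ [a]) *
          Real.log ((μx (px ++ List.ofFn w) / μx px) / (μy (py ++ List.ofFn w) / μy py))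
        + μx (List.ofFn w ++ [a]) *
          Real.log (condProb μx a (lastN M (List.ofFn w))
            / condProb μy a (lastN M (List.ofFn w))) := by
    intro w a
    set l := List.ofFn w with hl
    have hlen : M ≤ l.length := by rw [hl, List.length_ofFn]; exact hm
    have e1 : μx (px ++ (l ++ [a])) / μx px
        = (μx (px ++ l) / μx px) * condProb μx a (px ++ l) := by
      unfold condProb
      have h0 : μx px ≠ 0 := (hxpos px).ne'
      have h1 : μx (px ++ l) ≠ 0 := (hxpos (px ++ l)).ne'
      rw [← List.append_assoc]
      field_simp
    have e2 : μy (py ++ (l ++ [a])) / μy py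
        = (μy (py ++ l) / μy py) * condProb μy a (py ++ l) := by
      unfold condProb
      have h0 : μy py ≠ 0 := (hypos py).ne'
      have h1 : μy (py ++ l) ≠ 0 := (hypos (py ++ l)).ne'
      rw [← List.append_assoc]
      field_simp
    have mx : condProb μx a (px ++ l) = condProb μx a (lastN M l) := by
      rw [hxmem _ _ (by rw [List.length_append]; omega), lastN_append M px l hlen]
    have my : condProb μy a (py ++ l) = condProb μy a (lastN M l) := by
      rw [hymem _ _ (by rw [List.length_append]; omega), lastN_append M py l hlen]
    rw [e1, e2, mx, my]
    have hxr : 0 < μx (px ++ l) / μx px := div_pos (hxpos _) (hxpos _)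
    have hyr : 0 < μy (py ++ l) / μy py := div_pos (hypos _) (hypos _)
    have hcx : 0 < condProb μx a (lastN M l) := condProb_pos hxpos _ _
    have hcy : 0 < condProb μy a (lastN M l) := condProb_pos hypos _ _
    rw [show (μx (px ++ l) / μx px * condProb μx a (lastN M l))
          / (μy (py ++ l) / μy py * condProb μy a (lastN M l))
        = (μx (px ++ l) / μx px / (μy (py ++ l) / μy py))
          * (condProb μx a (lastN M l) / condProb μy a (lastN M l)) by
      field_simp]
    rw [Real.log_mul (div_pos hxr hyr).ne' (div_pos hcx hcy).ne', mul_add]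
  calc ∑ w : Fin m → A, ∑ a : A, μx (List.ofFn w ++ [a]) *
        Real.log ((μx (px ++ (List.ofFn w ++ [a])) / μx px)
          / (μy (py ++ (List.ofFn w ++ [a])) / μy py))
      = (∑ w : Fin m → A, ∑ a : A, μx (List.ofFn w ++ [a]) *
          Real.log ((μx (px ++ List.ofFn w) / μx px) / (μy (py ++ List.ofFn w) / μy py)))
        + ∑ w : Fin m → A, ∑ a : A, μx (List.ofFn w ++ [a]) *
          Real.log (condProb μx a (lastN M (List.ofFn w))
            / condProb μy a (lastN M (List.ofFn w))) := by
        rw [← Finset.sum_add_distrib]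
        refine Finset.sum_congr rfl fun w _ => ?_
        rw [← Finset.sum_add_distrib]
        exact Finset.sum_congr rfl fun a _ => key w a
    _ = (∑ w : Fin m → A, μx (List.ofFn w) *
          Real.log ((μx (px ++ List.ofFn w) / μx px) / (μy (py ++ List.ofFn w) / μy py)))
        + lamSum M μx μy := by
        congr 1
        · refine Finset.sum_congr rfl fun w _ => ?_
          rw [← Finset.sum_mul, ← hxcons]
        · obtain ⟨n, rfl⟩ : ∃ n, m = M + n := ⟨m - M, by omega⟩
          exact sum_last_stat M μx hxstat
            (fun v a => Real.log (condProb μx a v / condProb μy a v)) n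

end main

section main2
set_option linter.unusedSectionVars false
variable {A : Type*} [Fintype A]

lemma S_base_bound (M : ℕ) (μx μy : List A → ℝ)
    (hxpos : ∀ u, 0 < μx u) (hypos : ∀ u, 0 < μy u)
    (hxnil : μx [] = 1)
    (hxstat : ∀ u : List A, μx u = ∑ a : A, μx (a :: u))
    (hxmem : ∀ (u : List A) (a : A), M ≤ u.length → condProb μx a u = condProb μx a (lastN M u))
    (hymem : ∀ (u : List A) (a : A), M ≤ u.length → condProb μy a u = condProb μy a (lastN M u))
    (cx cy : ℝ)
    (hcx : ∀ (u : List A) (a : A), u.length = M → |Real.log (condProb μx a u)| ≤ cx)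
    (hcy : ∀ (u : List A) (a : A), u.length = M → |Real.log (condProb μy a u)| ≤ cy)
    (px py : List A) (hpx : M ≤ px.length) (hpy : M ≤ py.length) :
    |Sfun μx μy M px py| ≤ (M : ℝ) * (cx + cy) := by
  unfold Sfun
  have hbound : ∀ w : Fin M → A,
      |Real.log ((μx (px ++ List.ofFn w) / μx px) / (μy (py ++ List.ofFn w) / μy py))|
        ≤ (M : ℝ) * (cx + cy) := by
    intro w
    have hxr : 0 < μx (px ++ List.ofFn w) / μx px := div_pos (hxpos _) (hxpos _)
    have hyr : 0 < μy (py ++ List.ofFn w) / μy py := div_pos (hypos _) (hypos _)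
    rw [Real.log_div hxr.ne' hyr.ne']
    rw [log_chain μx hxpos (List.ofFn w) px, log_chain μy hypos (List.ofFn w) py]
    rw [← Finset.sum_sub_distrib]
    calc |∑ i : Fin (List.ofFn w).length,
            (Real.log (condProb μx ((List.ofFn w).get i) (px ++ (List.ofFn w).take i))
              - Real.log (condProb μy ((List.ofFn w).get i) (py ++ (List.ofFn w).take i)))|
        ≤ ∑ i : Fin (List.ofFn w).length,
            |Real.log (condProb μx ((List.ofFn w).get i) (px ++ (List.ofFn w).take i))
              - Real.log (condProb μy ((List.ofFn w).get i) (py ++ (List.ofFn w).take i))| :=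
          Finset.abs_sum_le_sum_abs _ _
      _ ≤ ∑ _i : Fin (List.ofFn w).length, (cx + cy) := by
          refine Finset.sum_le_sum fun i _ => ?_
          have h1 : M ≤ (px ++ (List.ofFn w).take (i : ℕ)).length := by
            rw [List.length_append]; omega
          have h2 : M ≤ (py ++ (List.ofFn w).take (i : ℕ)).length := by
            rw [List.length_append]; omega
          have bx : |Real.log (condProb μx ((List.ofFn w).get i)
              (px ++ (List.ofFn w).take (i : ℕ)))| ≤ cx := by
            rw [hxmem _ _ h1]
            exact hcx _ _ (lastN_length M _ h1)
          have by' : |Real.log (condProb μy ((List.ofFn w).get i)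
              (py ++ (List.ofFn w).take (i : ℕ)))| ≤ cy := by
            rw [hymem _ _ h2]
            exact hcy _ _ (lastN_length M _ h2)
          exact (abs_sub _ _).trans (add_le_add bx by')
      _ = (M : ℝ) * (cx + cy) := by
          rw [Finset.sum_const, Finset.card_univ, Fintype.card_fin, List.length_ofFn,
            nsmul_eq_mul]
  calc |∑ w : Fin M → A, μx (List.ofFn w) *
          Real.log ((μx (px ++ List.ofFn w) / μx px) / (μy (py ++ List.ofFn w) / μy py))|
      ≤ ∑ w : Fin M → A, |μx (List.ofFn w) *
          Real.log ((μx (px ++ List.ofFn w) / μx px) / (μy (py ++ List.ofFn w) / μy py))| :=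
        Finset.abs_sum_le_sum_abs _ _
    _ ≤ ∑ w : Fin M → A, μx (List.ofFn w) * ((M : ℝ) * (cx + cy)) := by
        refine Finset.sum_le_sum fun w _ => ?_
        rw [abs_mul, abs_of_pos (hxpos _)]
        exact mul_le_mul_of_nonneg_left (hbound w) (hxpos _).le
    _ = (M : ℝ) * (cx + cy) := by
        rw [← Finset.sum_mul, total_mass μx hxnil hxstat M, one_mul]

end main2



/-- For stationary measures `μx, μy` with memory at most `M` (and positive word
probabilities), the expected conditional log-likelihood ratio
`∑_{w ∈ Aᵐ} μx(w) log (μx(w|x_{-t}…x₀) / μy(w|y_{-k}…y₀))` equals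
`(m - M)·λ` up to a remainder bounded uniformly in `m, t, k` and the pasts,
where `λ = ∑_{v ∈ A^M} μx(v) ∑_{a ∈ A} μx(a|v) log (μx(a|v)/μy(a|v))`
(each weighted summand written as `μx(va) log (…)`). -/
theorem expected_log_likelihood_ratio {A : Type*} [Fintype A] (M : ℕ)
    (μx μy : List A → ℝ)
    (hxpos : ∀ u, 0 < μx u) (hypos : ∀ u, 0 < μy u)
    (hxnil : μx [] = 1) (hynil : μy [] = 1)
    (hxcons : ∀ u : List A, μx u = ∑ a : A, μx (u ++ [a]))
    (hycons : ∀ u : List A, μy u = ∑ a : A, μy (u ++ [a]))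
    (hxstat : ∀ u : List A, μx u = ∑ a : A, μx (a :: u))
    (hystat : ∀ u : List A, μy u = ∑ a : A, μy (a :: u))
    (hxmem : ∀ (u : List A) (a : A), M ≤ u.length → condProb μx a u = condProb μx a (lastN M u))
    (hymem : ∀ (u : List A) (a : A), M ≤ u.length → condProb μy a u = condProb μy a (lastN M u)) :
    ∃ C : ℝ, ∀ (m t k : ℕ), M < m → M ≤ t → M ≤ k →
      ∀ px py : List A, px.length = t + 1 → py.length = k + 1 →
      |(∑ w : Fin m → A, μx (List.ofFn w) *
            Real.log ((μx (px ++ List.ofFn w) / μx px) / (μy (py ++ List.ofFn w) / μy py))) -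
          ((m : ℝ) - (M : ℝ)) *
            (∑ v : Fin M → A, ∑ a : A, μx (List.ofFn v ++ [a]) *
              Real.log (condProb μx a (List.ofFn v) / condProb μy a (List.ofFn v)))| ≤ C := by
  obtain ⟨cx, hcx0, hcx⟩ := exists_logCondProb_bound M μx
  obtain ⟨cy, hcy0, hcy⟩ := exists_logCondProb_bound M μy
  refine ⟨(M : ℝ) * (cx + cy), ?_⟩
  intro m t k hm ht hk px py hpx hpy
  show |Sfun μx μy m px py - ((m : ℝ) - (M : ℝ)) * lamSum M μx μy| ≤ (M : ℝ) * (cx + cy)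
  obtain ⟨n, rfl⟩ : ∃ n, m = M + n := ⟨m - M, by omega⟩
  have key : ∀ j : ℕ, Sfun μx μy (M + j) px py
      = Sfun μx μy M px py + (j : ℝ) * lamSum M μx μy := by
    intro j
    induction j with
    | zero => simp
    | succ j ih =>
      have hty : M + (j + 1) = (M + j) + 1 := rfl
      rw [hty, S_step M μx μy hxpos hypos hxcons hxstat hxmem hymem (M + j)
        (Nat.le_add_right _ _) px py, ih]
      push_cast
      ring
  rw [key n]
  have hc : ((M + n : ℕ) : ℝ) - (M : ℝ) = (n : ℝ) := by push_cast; ring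
  rw [hc]
  rw [show Sfun μx μy M px py + (n : ℝ) * lamSum M μx μy - (n : ℝ) * lamSum M μx μy
      = Sfun μx μy M px py by ring]
  exact S_base_bound M μx μy hxpos hypos hxnil hxstat hxmem hymem cx cy hcx hcy px py
    (by omega) (by omega)
end
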